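/- Let B(x) = b_0 + b_1 x + ... + b_n x^n ∈ ℂ[x] with n < d, and let ξ = (ξ_1, ..., ξ_d) ∈ ℂ^d. Then max_{1≤i≤d} |B(ξ_i)| ≥ (1 − d^{3/2} D(ξ) M^{d−2}) · sqrt(Σ_{0≤j≤n} |b_j|^2), where M = max_{1≤i≤d} max{1, |ξ_i|} and D(ξ) is the finite discrepancy of ξ. -/

import Mathlib

/-- `ζ_d = exp(2πi/d)`. -/
noncomputable def zetad (d : ℕ) : ℂ := Complex.exp (2 * Real.pi * Complex.I / d)

/-- The finite discrepancy `D(ξ) = inf_{|u|=1} max_j min_i |ξ_i − u ζ_d^j|`. -/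
noncomputable def Disc {d : ℕ} (ξ : Fin d → ℂ) : ℝ :=
  sInf {t : ℝ | ∃ u : ℂ, ‖u‖ = 1 ∧
    t = ⨆ j : Fin d, ⨅ i : Fin d, ‖ξ i - u * zetad d ^ ((j : ℕ) + 1)‖}

open Complex Finset

lemma zetad_prim (d : ℕ) (hd : 0 < d) : IsPrimitiveRoot (zetad d) d := by
  simpa [zetad] using Complex.isPrimitiveRoot_exp d hd.ne'

lemma zetad_abs (d : ℕ) (hd : 0 < d) : ‖zetad d‖ = 1 := by
  have h : (2 * (Real.pi : ℂ) * Complex.I / d) = ((2 * Real.pi / d : ℝ) : ℂ) * Complex.I := by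
    push_cast; ring
  rw [zetad, h, Complex.norm_exp_ofReal_mul_I]

/-- vanishing of nontrivial root-of-unity power sums -/
lemma rootsum (d : ℕ) (hd : 0 < d) (m : ℤ) (hm : m ≠ 0) (hmd : m.natAbs < d) :
    ∑ i : Fin d, (zetad d) ^ (((i : ℕ) + 1 : ℕ) * m) = 0 := by
  have hprim := zetad_prim d hd
  set ζ := zetad d
  have hζ0 : ζ ≠ 0 := hprim.ne_zero hd.ne'
  set x := ζ ^ m with hx
  have hx1 : x ≠ 1 := by
    rw [hx, Ne, hprim.zpow_eq_one_iff_dvd]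
    intro hdvd
    have h1 : d ∣ m.natAbs := by
      have := Int.natAbs_dvd_natAbs.2 hdvd
      simpa using this
    have h2 := Nat.le_of_dvd (Int.natAbs_pos.2 hm) h1
    omega
  have hxd : x ^ d = 1 := by
    rw [hx, ← zpow_natCast (ζ ^ m) d, ← zpow_mul, mul_comm, zpow_mul, zpow_natCast,
      hprim.pow_eq_one, one_zpow]
  have hgeom : ∑ i ∈ Finset.range d, x ^ i = 0 := by
    rw [geom_sum_eq hx1, hxd, sub_self, zero_div]
  calc ∑ i : Fin d, ζ ^ (((i : ℕ) + 1 : ℕ) * m)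
      = ∑ i : Fin d, x * x ^ (i : ℕ) := by
        refine Finset.sum_congr rfl fun i _ => ?_
        rw [hx, ← zpow_natCast (ζ ^ m) (i : ℕ), ← zpow_mul]
        rw [← zpow_add₀ hζ0]
        congr 1
        push_cast
        ring
    _ = x * ∑ i ∈ Finset.range d, x ^ i := by
        rw [← Finset.mul_sum, Fin.sum_univ_eq_sum_range]
    _ = 0 := by rw [hgeom, mul_zero]

lemma conj_eq_inv {z : ℂ} (hz : ‖z‖ = 1) : (starRingEnd ℂ) z = z⁻¹ := by
  have hz0 : z ≠ 0 := by
    intro h; rw [h] at hz; simp at hz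
  field_simp
  rw [mul_comm, Complex.mul_conj]
  norm_cast
  rw [Complex.normSq_eq_norm_sq, hz]; norm_num

/-- inner orthogonality sums -/
lemma wsum (d : ℕ) (hd : 0 < d) (u : ℂ) (hu : ‖u‖ = 1) (j k : ℕ)
    (hj : j < d) (hk : k < d) :
    ∑ i : Fin d, (u * zetad d ^ ((i : ℕ) + 1)) ^ j *
        (starRingEnd ℂ) (u * zetad d ^ ((i : ℕ) + 1)) ^ k
      = if j = k then (d : ℂ) else 0 := by
  have hζabs := zetad_abs d hd
  have hwabs : ∀ i : Fin d, ‖u * zetad d ^ ((i : ℕ) + 1)‖ = 1 := by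
    intro i; rw [norm_mul, norm_pow, hu, hζabs, one_pow, mul_one]
  have hw0 : ∀ i : Fin d, (u * zetad d ^ ((i : ℕ) + 1)) ≠ 0 := by
    intro i h
    have := hwabs i; rw [h] at this; simp at this
  have hstep : ∀ i : Fin d, (u * zetad d ^ ((i : ℕ) + 1)) ^ j *
        (starRingEnd ℂ) (u * zetad d ^ ((i : ℕ) + 1)) ^ k
      = (u * zetad d ^ ((i : ℕ) + 1)) ^ ((j : ℤ) - (k : ℤ)) := by
    intro i
    rw [conj_eq_inv (hwabs i), inv_pow, ← zpow_natCast _ j, ← zpow_natCast _ k,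
      ← inv_zpow, inv_zpow', ← zpow_add₀ (hw0 i), sub_eq_add_neg]
  rw [Finset.sum_congr rfl fun i _ => hstep i]
  by_cases hjk : j = k
  · subst hjk
    simp
  · rw [if_neg hjk]
    set m : ℤ := (j : ℤ) - (k : ℤ) with hm
    have hm0 : m ≠ 0 := by
      simp only [hm, sub_ne_zero]; exact_mod_cast hjk
    have hmd : m.natAbs < d := by
      rw [hm]; omega
    have hu0 : u ≠ 0 := by
      intro h; rw [h] at hu; simp at hu
    have hζ0 : (zetad d) ≠ 0 := (zetad_prim d hd).ne_zero hd.ne'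
    calc ∑ i : Fin d, (u * zetad d ^ ((i : ℕ) + 1)) ^ m
        = ∑ i : Fin d, u ^ m * (zetad d) ^ ((((i : ℕ) + 1 : ℕ)) * m) := by
          refine Finset.sum_congr rfl fun i _ => ?_
          rw [mul_zpow, ← zpow_natCast (zetad d) ((i : ℕ) + 1), ← zpow_mul]
      _ = u ^ m * ∑ i : Fin d, (zetad d) ^ ((((i : ℕ) + 1 : ℕ)) * m) := by
          rw [Finset.mul_sum]
      _ = 0 := by rw [rootsum d hd m hm0 hmd, mul_zero]

/-- the orthogonality identity: `∑_i |B(u ζ^{i+1})|² = d ∑_j |b_j|²`. -/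
lemma ortho (d n : ℕ) (hd : 0 < d) (hn : n < d) (b : Fin (n + 1) → ℂ) (u : ℂ)
    (hu : ‖u‖ = 1) :
    ∑ i : Fin d, ‖∑ j : Fin (n + 1), b j * (u * zetad d ^ ((i : ℕ) + 1)) ^ (j : ℕ)‖ ^ 2
      = d * ∑ j : Fin (n + 1), ‖b j‖ ^ 2 := by
  set w : Fin d → ℂ := fun i => u * zetad d ^ ((i : ℕ) + 1) with hw
  have key : ∑ i : Fin d, ((∑ j : Fin (n + 1), b j * w i ^ (j : ℕ)) *
      (starRingEnd ℂ) (∑ j : Fin (n + 1), b j * w i ^ (j : ℕ)))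
      = (d : ℂ) * ∑ j : Fin (n + 1), b j * (starRingEnd ℂ) (b j) := by
    have expand : ∀ i : Fin d, (∑ j : Fin (n + 1), b j * w i ^ (j : ℕ)) *
        (starRingEnd ℂ) (∑ j : Fin (n + 1), b j * w i ^ (j : ℕ))
        = ∑ j : Fin (n + 1), ∑ k : Fin (n + 1),
            (b j * (starRingEnd ℂ) (b k)) * (w i ^ (j : ℕ) * ((starRingEnd ℂ) (w i)) ^ (k : ℕ)) := by
      intro i
      rw [map_sum, Finset.sum_mul_sum]
      refine Finset.sum_congr rfl fun j _ => Finset.sum_congr rfl fun k _ => ?_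
      rw [map_mul, map_pow]
      ring
    rw [Finset.sum_congr rfl fun i _ => expand i, Finset.sum_comm]
    have swap2 : ∀ j : Fin (n+1), ∑ i : Fin d, ∑ k : Fin (n + 1),
        (b j * (starRingEnd ℂ) (b k)) * (w i ^ (j : ℕ) * ((starRingEnd ℂ) (w i)) ^ (k : ℕ))
        = ∑ k : Fin (n + 1), (b j * (starRingEnd ℂ) (b k)) *
            ∑ i : Fin d, (w i ^ (j : ℕ) * ((starRingEnd ℂ) (w i)) ^ (k : ℕ)) := by
      intro j
      rw [Finset.sum_comm]
      exact Finset.sum_congr rfl fun k _ => (Finset.mul_sum _ _ _).symm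
    rw [Finset.sum_congr rfl fun j _ => swap2 j]
    have inner : ∀ j k : Fin (n + 1),
        ∑ i : Fin d, (w i ^ (j : ℕ) * ((starRingEnd ℂ) (w i)) ^ (k : ℕ))
        = if (j : ℕ) = (k : ℕ) then (d : ℂ) else 0 :=
      fun j k => wsum d hd u hu j k (lt_of_le_of_lt (Nat.le_of_lt_succ j.2) hn)
        (lt_of_le_of_lt (Nat.le_of_lt_succ k.2) hn)
    rw [Finset.sum_congr rfl fun j _ => Finset.sum_congr rfl fun k _ => by rw [inner j k]]
    rw [Finset.mul_sum]
    refine Finset.sum_congr rfl fun j _ => ?_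
    rw [Finset.sum_eq_single j]
    · simp [mul_comm]
    · intro k _ hkj
      rw [if_neg (by simpa [Fin.val_eq_val] using (Ne.symm hkj)), mul_zero]
    · intro h; exact absurd (Finset.mem_univ j) h
  have habs : ∀ z : ℂ, ‖z‖ ^ 2 = (z * (starRingEnd ℂ) z).re := by
    intro z
    rw [Complex.mul_conj, Complex.ofReal_re, Complex.normSq_eq_norm_sq]
  calc ∑ i : Fin d, ‖∑ j : Fin (n + 1), b j * w i ^ (j : ℕ)‖ ^ 2
      = (∑ i : Fin d, ((∑ j : Fin (n + 1), b j * w i ^ (j : ℕ)) *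
          (starRingEnd ℂ) (∑ j : Fin (n + 1), b j * w i ^ (j : ℕ)))).re := by
        rw [Complex.re_sum]
        exact Finset.sum_congr rfl fun i _ => habs _
    _ = ((d : ℂ) * ∑ j : Fin (n + 1), b j * (starRingEnd ℂ) (b j)).re := by rw [key]
    _ = d * ∑ j : Fin (n + 1), ‖b j‖ ^ 2 := by
        have hsum : ∑ j : Fin (n + 1), b j * (starRingEnd ℂ) (b j)
            = ((∑ j : Fin (n + 1), ‖b j‖ ^ 2 : ℝ) : ℂ) := by
          rw [Complex.ofReal_sum]
          refine Finset.sum_congr rfl fun j _ => ?_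
          rw [Complex.mul_conj, Complex.normSq_eq_norm_sq]
        rw [hsum, ← Complex.ofReal_natCast, ← Complex.ofReal_mul, Complex.ofReal_re]

/-- Lipschitz-type bound for the polynomial on the disk of radius `M`. -/
lemma lip (d n : ℕ) (hn : n < d) (b : Fin (n + 1) → ℂ) (M : ℝ) (h1M : 1 ≤ M)
    (x y : ℂ) (hx : ‖x‖ ≤ M) (hy : ‖y‖ ≤ M) :
    ‖(∑ j : Fin (n + 1), b j * x ^ (j : ℕ)) - ∑ j : Fin (n + 1), b j * y ^ (j : ℕ)‖
      ≤ ‖x - y‖ *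
        ((d : ℝ) ^ ((3 : ℝ) / 2) * M ^ (d - 2) *
          Real.sqrt (∑ j : Fin (n + 1), ‖b j‖ ^ 2)) := by
  have hM0 : 0 ≤ M := le_trans zero_le_one h1M
  have hxy0 : 0 ≤ ‖x - y‖ := norm_nonneg _
  -- term bound
  have hterm : ∀ j : ℕ, j < n + 1 →
      ‖x ^ j - y ^ j‖ ≤ (j : ℝ) * M ^ (d - 2) * ‖x - y‖ := by
    intro j hj
    rcases Nat.eq_zero_or_pos j with h0 | hjpos
    · subst h0; simp
    · have hid : x ^ j - y ^ j = (∑ i ∈ Finset.range j, x ^ i * y ^ (j - 1 - i)) * (x - y) :=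
        (geom_sum₂_mul x y j).symm
      rw [hid, norm_mul]
      have hsum : ‖∑ i ∈ Finset.range j, x ^ i * y ^ (j - 1 - i)‖
          ≤ (j : ℝ) * M ^ (d - 2) := by
        calc ‖∑ i ∈ Finset.range j, x ^ i * y ^ (j - 1 - i)‖
            ≤ ∑ i ∈ Finset.range j, ‖x ^ i * y ^ (j - 1 - i)‖ :=
              norm_sum_le _ _
          _ ≤ ∑ _i ∈ Finset.range j, M ^ (d - 2) := by
              refine Finset.sum_le_sum fun i hi => ?_
              rw [norm_mul, norm_pow, norm_pow]
              have hi' : i < j := Finset.mem_range.mp hi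
              calc ‖x‖ ^ i * ‖y‖ ^ (j - 1 - i)
                  ≤ M ^ i * M ^ (j - 1 - i) := by
                    apply mul_le_mul (pow_le_pow_left₀ (norm_nonneg _) hx i)
                      (pow_le_pow_left₀ (norm_nonneg _) hy _)
                      (pow_nonneg (norm_nonneg _) _) (pow_nonneg hM0 _)
                _ = M ^ (i + (j - 1 - i)) := by rw [pow_add]
                _ ≤ M ^ (d - 2) := by
                    apply pow_le_pow_right₀ h1M
                    omega
          _ = (j : ℝ) * M ^ (d - 2) := by
              rw [Finset.sum_const, Finset.card_range, nsmul_eq_mul]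
      exact mul_le_mul_of_nonneg_right hsum hxy0
  calc ‖(∑ j : Fin (n + 1), b j * x ^ (j : ℕ)) - ∑ j : Fin (n + 1), b j * y ^ (j : ℕ)‖
      = ‖∑ j : Fin (n + 1), b j * (x ^ (j : ℕ) - y ^ (j : ℕ))‖ := by
        rw [← Finset.sum_sub_distrib]
        congr 1
        exact Finset.sum_congr rfl fun j _ => (mul_sub _ _ _).symm
    _ ≤ ∑ j : Fin (n + 1), ‖b j * (x ^ (j : ℕ) - y ^ (j : ℕ))‖ :=
        norm_sum_le _ _
    _ ≤ ∑ j : Fin (n + 1), ‖b j‖ * ((j : ℝ) * M ^ (d - 2) * ‖x - y‖) := by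
        refine Finset.sum_le_sum fun j _ => ?_
        rw [norm_mul]
        exact mul_le_mul_of_nonneg_left (hterm j j.2) (norm_nonneg _)
    _ = ‖x - y‖ * M ^ (d - 2) * ∑ j : Fin (n + 1), (j : ℝ) * ‖b j‖ := by
        rw [Finset.mul_sum]
        exact Finset.sum_congr rfl fun j _ => by ring
    _ ≤ ‖x - y‖ * M ^ (d - 2) *
          ((d : ℝ) ^ ((3 : ℝ) / 2) * Real.sqrt (∑ j : Fin (n + 1), ‖b j‖ ^ 2)) := by
        apply mul_le_mul_of_nonneg_left _ (mul_nonneg hxy0 (pow_nonneg hM0 _))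
        calc ∑ j : Fin (n + 1), (j : ℝ) * ‖b j‖
            ≤ Real.sqrt (∑ j : Fin (n + 1), ((j : ℕ) : ℝ) ^ 2) *
              Real.sqrt (∑ j : Fin (n + 1), ‖b j‖ ^ 2) :=
              Real.sum_mul_le_sqrt_mul_sqrt _ _ _
          _ ≤ (d : ℝ) ^ ((3 : ℝ) / 2) *
              Real.sqrt (∑ j : Fin (n + 1), ‖b j‖ ^ 2) := by
              apply mul_le_mul_of_nonneg_right _ (Real.sqrt_nonneg _)
              have hsum : ∑ j : Fin (n + 1), ((j : ℕ) : ℝ) ^ 2 ≤ (d : ℝ) ^ 3 := by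
                calc ∑ j : Fin (n + 1), ((j : ℕ) : ℝ) ^ 2
                    ≤ ∑ _j : Fin (n + 1), (d : ℝ) ^ 2 := by
                      refine Finset.sum_le_sum fun j _ => ?_
                      have : ((j : ℕ) : ℝ) ≤ (d : ℝ) := by
                        exact_mod_cast le_of_lt (lt_of_lt_of_le j.2 hn)
                      nlinarith [Nat.cast_nonneg (α := ℝ) (j : ℕ)]
                  _ = ((n : ℝ) + 1) * (d : ℝ) ^ 2 := by
                      rw [Finset.sum_const, nsmul_eq_mul]
                      simp
                  _ ≤ (d : ℝ) * (d : ℝ) ^ 2 := by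
                      have : ((n : ℝ) + 1) ≤ (d : ℝ) := by exact_mod_cast hn
                      nlinarith [sq_nonneg (d : ℝ)]
                  _ = (d : ℝ) ^ 3 := by ring
              calc Real.sqrt (∑ j : Fin (n + 1), ((j : ℕ) : ℝ) ^ 2)
                  ≤ Real.sqrt ((d : ℝ) ^ 3) := Real.sqrt_le_sqrt hsum
                _ = (d : ℝ) ^ ((3 : ℝ) / 2) := by
                    rw [Real.sqrt_eq_rpow, ← Real.rpow_natCast (d : ℝ) 3,
                      ← Real.rpow_mul (Nat.cast_nonneg d)]
                    norm_num
    _ = ‖x - y‖ *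
        ((d : ℝ) ^ ((3 : ℝ) / 2) * M ^ (d - 2) *
          Real.sqrt (∑ j : Fin (n + 1), ‖b j‖ ^ 2)) := by ring

/-- `max_i |B(ξ_i)| ≥ (1 − d^{3/2} D(ξ) M^{d−2}) · sqrt(Σ_j |b_j|²)`
with `M = max_i max{1, |ξ_i|}`. -/
theorem stmt2 (d n : ℕ) (hd : 0 < d) (hn : n < d) (b : Fin (n + 1) → ℂ) (ξ : Fin d → ℂ) :
    (1 - (d : ℝ) ^ ((3 : ℝ) / 2) * Disc ξ *
        (⨆ i : Fin d, max 1 ‖ξ i‖) ^ (d - 2)) *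
      Real.sqrt (∑ j : Fin (n + 1), ‖b j‖ ^ 2) ≤
    ⨆ i : Fin d, ‖∑ j : Fin (n + 1), b j * ξ i ^ (j : ℕ)‖ := by
  have hne : Nonempty (Fin d) := ⟨⟨0, hd⟩⟩
  set S : ℝ := ∑ j : Fin (n + 1), ‖b j‖ ^ 2 with hSdef
  have hS0 : 0 ≤ S := Finset.sum_nonneg fun j _ => sq_nonneg _
  set M : ℝ := ⨆ i : Fin d, max 1 ‖ξ i‖ with hMdef
  have hMbdd : BddAbove (Set.range fun i : Fin d => max 1 ‖ξ i‖) :=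
    Set.Finite.bddAbove (Set.finite_range _)
  have h1M : 1 ≤ M := le_trans (le_max_left _ _) (le_ciSup hMbdd ⟨0, hd⟩)
  have hM0 : 0 ≤ M := le_trans zero_le_one h1M
  have hMx : ∀ i, ‖ξ i‖ ≤ M := fun i =>
    le_trans (le_max_right _ _) (le_ciSup hMbdd i)
  set R : ℝ := ⨆ i : Fin d, ‖∑ j : Fin (n + 1), b j * ξ i ^ (j : ℕ)‖ with hRdef
  have hRbdd : BddAbove (Set.range fun i : Fin d =>
      ‖∑ j : Fin (n + 1), b j * ξ i ^ (j : ℕ)‖) :=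
    Set.Finite.bddAbove (Set.finite_range _)
  have hRge : ∀ i, ‖∑ j : Fin (n + 1), b j * ξ i ^ (j : ℕ)‖ ≤ R := fun i =>
    le_ciSup hRbdd i
  set K : ℝ := (d : ℝ) ^ ((3 : ℝ) / 2) * M ^ (d - 2) * Real.sqrt S with hKdef
  have hK0 : 0 ≤ K := by
    rw [hKdef]
    exact mul_nonneg (mul_nonneg (Real.rpow_nonneg (Nat.cast_nonneg d) _)
      (pow_nonneg hM0 _)) (Real.sqrt_nonneg _)
  -- Main claim for a fixed rotation u
  have claim : ∀ u : ℂ, ‖u‖ = 1 →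
      (1 - (d : ℝ) ^ ((3 : ℝ) / 2) *
          (⨆ j : Fin d, ⨅ i : Fin d, ‖ξ i - u * zetad d ^ ((j : ℕ) + 1)‖) *
          M ^ (d - 2)) * Real.sqrt S ≤ R := by
    intro u hu
    set T : ℝ := ⨆ j : Fin d, ⨅ i : Fin d, ‖ξ i - u * zetad d ^ ((j : ℕ) + 1)‖
      with hTdef
    have hTbdd : BddAbove (Set.range fun j : Fin d =>
        ⨅ i : Fin d, ‖ξ i - u * zetad d ^ ((j : ℕ) + 1)‖) :=
      Set.Finite.bddAbove (Set.finite_range _)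
    have horto := ortho d n hd hn b u hu
    -- find j₀ with large |B(w_{j₀})|
    obtain ⟨j₀, hj₀⟩ : ∃ j₀ : Fin d,
        S ≤ ‖∑ j : Fin (n + 1), b j * (u * zetad d ^ ((j₀ : ℕ) + 1)) ^ (j : ℕ)‖ ^ 2 := by
      by_contra h
      push_neg at h
      have hlt : ∑ i : Fin d,
          ‖∑ j : Fin (n + 1), b j * (u * zetad d ^ ((i : ℕ) + 1)) ^ (j : ℕ)‖ ^ 2
          < ∑ _i : Fin d, S :=
        Finset.sum_lt_sum_of_nonempty Finset.univ_nonempty fun i _ => h i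
      rw [horto, Finset.sum_const, nsmul_eq_mul, Finset.card_univ, Fintype.card_fin] at hlt
      exact lt_irrefl _ hlt
    have hj₀' : Real.sqrt S ≤
        ‖∑ j : Fin (n + 1), b j * (u * zetad d ^ ((j₀ : ℕ) + 1)) ^ (j : ℕ)‖ := by
      have := Real.sqrt_le_sqrt hj₀
      rwa [Real.sqrt_sq (norm_nonneg _)] at this
    obtain ⟨i₀, hi₀⟩ := exists_eq_ciInf_of_finite
      (f := fun i : Fin d => ‖ξ i - u * zetad d ^ ((j₀ : ℕ) + 1)‖)
    have hdist : ‖ξ i₀ - u * zetad d ^ ((j₀ : ℕ) + 1)‖ ≤ T := by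
      rw [hi₀]
      exact le_ciSup hTbdd j₀
    have hwM : ‖u * zetad d ^ ((j₀ : ℕ) + 1)‖ ≤ M := by
      rw [norm_mul, norm_pow, hu, zetad_abs d hd, one_pow, mul_one]
      exact h1M
    have hlip := lip d n hn b M h1M (ξ i₀) (u * zetad d ^ ((j₀ : ℕ) + 1)) (hMx i₀) hwM
    -- triangle inequality
    have htri : ‖∑ j : Fin (n + 1), b j * (u * zetad d ^ ((j₀ : ℕ) + 1)) ^ (j : ℕ)‖
        ≤ ‖∑ j : Fin (n + 1), b j * ξ i₀ ^ (j : ℕ)‖ +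
          ‖(∑ j : Fin (n + 1), b j * ξ i₀ ^ (j : ℕ)) -
            ∑ j : Fin (n + 1), b j * (u * zetad d ^ ((j₀ : ℕ) + 1)) ^ (j : ℕ)‖ := by
      have h := norm_add_le
        ((∑ j : Fin (n + 1), b j * (u * zetad d ^ ((j₀ : ℕ) + 1)) ^ (j : ℕ)) -
          ∑ j : Fin (n + 1), b j * ξ i₀ ^ (j : ℕ))
        (∑ j : Fin (n + 1), b j * ξ i₀ ^ (j : ℕ))
      rw [sub_add_cancel] at h
      rw [norm_sub_rev
        ((∑ j : Fin (n + 1), b j * (u * zetad d ^ ((j₀ : ℕ) + 1)) ^ (j : ℕ)))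
        (∑ j : Fin (n + 1), b j * ξ i₀ ^ (j : ℕ))] at h
      linarith
    have hdiff : ‖(∑ j : Fin (n + 1), b j * ξ i₀ ^ (j : ℕ)) -
            ∑ j : Fin (n + 1), b j * (u * zetad d ^ ((j₀ : ℕ) + 1)) ^ (j : ℕ)‖ ≤ T * K := by
      refine le_trans hlip ?_
      rw [hKdef]
      exact mul_le_mul_of_nonneg_right hdist (hKdef ▸ hK0)
    have hfin : Real.sqrt S - T * K ≤ R :=
      le_trans (by linarith [hRge i₀]) (le_refl R)
    have hidK : (1 - (d : ℝ) ^ ((3 : ℝ) / 2) * T * M ^ (d - 2)) * Real.sqrt S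
        = Real.sqrt S - T * K := by
      rw [hKdef]; ring
    linarith [hfin, hidK]
  -- Final ε-argument over the infimum defining Disc
  have hDisc : Disc ξ = sInf {t : ℝ | ∃ u : ℂ, ‖u‖ = 1 ∧
      t = ⨆ j : Fin d, ⨅ i : Fin d, ‖ξ i - u * zetad d ^ ((j : ℕ) + 1)‖} := rfl
  apply le_of_forall_pos_le_add
  intro ε hε
  have hsetne : {t : ℝ | ∃ u : ℂ, ‖u‖ = 1 ∧
      t = ⨆ j : Fin d, ⨅ i : Fin d, ‖ξ i - u * zetad d ^ ((j : ℕ) + 1)‖}.Nonempty :=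
    ⟨_, 1, by simp, rfl⟩
  have hδ : 0 < ε / (K + 1) := div_pos hε (by linarith)
  obtain ⟨t, ⟨u, hu, rfl⟩, htlt⟩ := Real.lt_sInf_add_pos hsetne hδ
  have hcl := claim u hu
  set T : ℝ := ⨆ j : Fin d, ⨅ i : Fin d, ‖ξ i - u * zetad d ^ ((j : ℕ) + 1)‖
  have hTD : T - Disc ξ ≤ ε / (K + 1) := by
    rw [hDisc]; linarith
  have hKK : K * (ε / (K + 1)) ≤ ε := by
    rw [div_eq_inv_mul, ← mul_assoc]
    have h1 : K * (K + 1)⁻¹ ≤ 1 := by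
      rw [← div_eq_mul_inv, div_le_one (by linarith)]
      linarith
    nlinarith
  have hid : (1 - (d : ℝ) ^ ((3 : ℝ) / 2) * Disc ξ * M ^ (d - 2)) * Real.sqrt S
      = (1 - (d : ℝ) ^ ((3 : ℝ) / 2) * T * M ^ (d - 2)) * Real.sqrt S + (T - Disc ξ) * K := by
    rw [hKdef]; ring
  have hbound : (T - Disc ξ) * K ≤ ε := by
    calc (T - Disc ξ) * K ≤ (ε / (K + 1)) * K := mul_le_mul_of_nonneg_right hTD hK0
      _ = K * (ε / (K + 1)) := by ring
      _ ≤ ε := hKK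
  linarith [hcl, hid, hbound]
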